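/- Let d ≥ 1 and let σ ∈ A_{d−1} be a (d−1)-simplex of the apartment complex. For a small lift σ̃ = {x_1,…,x_d} of σ (with x_0 = x_d − (1,…,1) and x_0 ⪇ x_1 ⪇ ⋯ ⪇ x_d), each difference x_i − x_{i−1} (1 ≤ i ≤ d) is the standard basis vector e_{w(i)} of Z^{⊕d} for a uniquely determined w(i), and w : {1,…,d} → {1,…,d} is a permutation. Then the map {1,…,d} → A_0 sending i to the class of x_{w^{-1}(i)} in A_0 (an element [σ̃] of T(σ)) does not depend on the choice of the small lift σ̃. -/

import Mathlib

/-!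
STATEMENT 4: Let `d ≥ 1` and `σ ∈ A_{d−1}`.  For a small lift `σ̃ = {x_1,…,x_d}` of
`σ` (periodically extended, with `x_0 = x_d − (1,…,1)`), each difference
`x_i − x_{i−1}` is a standard basis vector `e_{w(i)}` for a uniquely determined
index `w(i)`, and `w` is a permutation of `{1,…,d}`.  Moreover the map
`{1,…,d} → A_0`, `i ↦ class of x_{w^{-1}(i)}`, does not depend on the choice of the
small lift `σ̃`.

Encoding:  a small lift (periodically extended) is a chain `x : ℤ → ℤ^d` with
`x j ⪇ x (j+1)` and `x (j+d) = x j + (1,…,1)`; the function `w : ℤ → Fin d`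
records the direction of each step (`x (j+1) − x j = e_{w j}`); `w` being a
permutation is expressed by "injectivity modulo `d`" plus surjectivity, and the
independence of the lift is: if `w j = w' j'` then the classes of `x j` and
`x' j'` in `A_0` agree.
-/

/-- A (periodically extended) small lift of a `(d−1)`-simplex of the apartment:
a strictly increasing chain of period `d`. -/
def IsSmallChain (d : ℕ) (x : ℤ → (Fin d → ℤ)) : Prop :=
  (∀ j : ℤ, x j < x (j + 1)) ∧ ∀ j : ℤ, x (j + (d : ℤ)) = x j + 1

/-- The canonical surjection `q : ℤ^d → A_0 = ℤ^d/ℤ(1,…,1)`. -/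
def qA0 (d : ℕ) : (Fin d → ℤ) →+ (Fin d → ℤ) ⧸ AddSubgroup.zmultiples (1 : Fin d → ℤ) :=
  QuotientAddGroup.mk' _

section Aux
variable {d : ℕ} {x : ℤ → Fin d → ℤ} {w : ℤ → Fin d}

lemma single_inj {k k' : Fin d} (h : (Pi.single k 1 : Fin d → ℤ) = Pi.single k' 1) : k = k' := by
  have := congrFun h k
  simp [Pi.single_apply] at this
  by_contra hkk
  simp [hkk] at this

lemma chain_mono (hx : IsSmallChain d x) : StrictMono x :=
  strictMono_int_of_lt_succ hx.1

lemma chain_add_nat (hw : ∀ j : ℤ, x (j + 1) = x j + Pi.single (w j) 1) (j : ℤ) (n : ℕ) :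
    x (j + n) = x j + ∑ t ∈ Finset.range n, Pi.single (w (j + t)) 1 := by
  induction n with
  | zero => simp
  | succ n ih =>
    have e : (j + ((n:ℤ) + 1)) = (j + n) + 1 := by ring
    push_cast
    rw [e, hw, ih, Finset.sum_range_succ, add_assoc]

lemma chain_count (hx : IsSmallChain d x)
    (hw : ∀ j : ℤ, x (j + 1) = x j + Pi.single (w j) 1) (j : ℤ) (k : Fin d) :
    ((Finset.range d).filter (fun t : ℕ => w (j + (t:ℤ)) = k)).card = 1 := by
  have h := chain_add_nat hw j d
  rw [hx.2 j] at h
  have h2 : ∑ t ∈ Finset.range d, (Pi.single (w (j + (t:ℤ))) 1 : Fin d → ℤ) = 1 :=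
    (add_left_cancel h.symm)
  have h3 := congrFun h2 k
  simp only [Finset.sum_apply, Pi.single_apply, Pi.one_apply] at h3
  have h4 : (((Finset.range d).filter (fun t : ℕ => k = w (j + (t:ℤ)))).card : ℤ) = 1 := by
    rw [← h3, Finset.sum_boole]
  have h5 : ((Finset.range d).filter (fun t : ℕ => k = w (j + (t:ℤ)))).card = 1 := by
    exact_mod_cast h4
  rw [← h5]
  congr 1
  ext t
  simp [eq_comm]

lemma w_period (hx : IsSmallChain d x)
    (hw : ∀ j : ℤ, x (j + 1) = x j + Pi.single (w j) 1) (j : ℤ) : w (j + d) = w j := by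
  have h1 : x (j + d + 1) = x (j+1) + 1 := by
    rw [show (j:ℤ)+d+1 = (j+1)+d by ring, hx.2]
  have h2 := hw (j + d)
  rw [hx.2 j, h1, hw j] at h2
  have hs : (Pi.single (w (j+d)) 1 : Fin d → ℤ) = Pi.single (w j) 1 := by
    have := h2
    rw [add_right_comm] at this
    exact (add_left_cancel this).symm
  exact single_inj hs

lemma w_period_int (hx : IsSmallChain d x)
    (hw : ∀ j : ℤ, x (j + 1) = x j + Pi.single (w j) 1) (j : ℤ) (m : ℤ) :
    w (j + m * d) = w j := by
  induction m using Int.induction_on with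
  | zero => simp
  | succ n ih =>
    rw [show j + ((n:ℤ)+1)*d = (j + n*d) + d by ring, w_period hx hw, ih]
  | pred n ih =>
    rw [show j + (-(n:ℤ)-1)*d = (j + (-n)*d - d) by ring] at *
    have := w_period hx hw (j + (-(n:ℤ))*d - d)
    rw [sub_add_cancel] at this
    rw [this] at ih
    exact ih

lemma chain_period_int (hx : IsSmallChain d x) (j : ℤ) (m : ℤ) :
    x (j + m * d) = x j + m • (1 : Fin d → ℤ) := by
  induction m using Int.induction_on with
  | zero => simp
  | succ n ih =>
    rw [show j + ((n:ℤ)+1)*d = (j + n*d) + d by ring, hx.2, ih, add_smul, one_smul, add_assoc]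
  | pred n ih =>
    have h := hx.2 (j + (-(n:ℤ)-1)*d)
    rw [show j + (-(n:ℤ)-1)*d + d = j + (-n)*d by ring] at h
    rw [ih] at h
    have : x (j + (-(n:ℤ)-1)*d) = x j + (-(n:ℤ))•(1 : Fin d → ℤ) - 1 :=
      eq_sub_of_add_eq h.symm
    rw [this]
    have e : (-(n:ℤ)-1) • (1 : Fin d → ℤ) = (-(n:ℤ)) • (1 : Fin d → ℤ) - 1 := by
      rw [sub_smul, one_smul]
    rw [e]; abel

lemma qA0_eq {a b : Fin d → ℤ} : qA0 d a = qA0 d b ↔ ∃ m : ℤ, b = a + m • 1 := by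
  rw [qA0, QuotientAddGroup.mk'_eq_mk']
  constructor
  · rintro ⟨z, hz, rfl⟩
    obtain ⟨m, rfl⟩ := AddSubgroup.mem_zmultiples_iff.mp hz
    exact ⟨m, rfl⟩
  · rintro ⟨m, rfl⟩
    exact ⟨m • 1, AddSubgroup.mem_zmultiples_iff.mpr ⟨m, rfl⟩, rfl⟩

lemma w_inj (hd : 1 ≤ d) (hx : IsSmallChain d x)
    (hw : ∀ j : ℤ, x (j + 1) = x j + Pi.single (w j) 1)
    (j₁ j₂ : ℤ) (h : w j₁ = w j₂) : (d : ℤ) ∣ j₁ - j₂ := by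
  have hd0 : (0:ℤ) < d := by exact_mod_cast hd
  set r := (j₂ - j₁) % d with hr
  have hr0 : 0 ≤ r := Int.emod_nonneg _ (ne_of_gt hd0)
  have hrd : r < d := Int.emod_lt_of_pos _ hd0
  have hq : j₂ = (j₁ + r) + ((j₂ - j₁) / d) * d := by
    have h0 := Int.emod_add_mul_ediv (j₂ - j₁) d
    linarith [h0]
  have hw2 : w (j₁ + r) = w j₁ := by
    rw [← w_period_int hx hw (j₁ + r) ((j₂ - j₁) / d), ← hq, ← h]
  -- counting: both 0 and r.toNat are in the filter
  have hc := chain_count hx hw j₁ (w j₁)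
  obtain ⟨a, ha⟩ := Finset.card_eq_one.mp hc
  have h0mem : (0 : ℕ) ∈ (Finset.range d).filter (fun t : ℕ => w (j₁ + (t:ℤ)) = w j₁) := by
    simp only [Finset.mem_filter, Finset.mem_range]
    exact ⟨by omega, by simp⟩
  have hrmem : r.toNat ∈ (Finset.range d).filter (fun t : ℕ => w (j₁ + (t:ℤ)) = w j₁) := by
    rw [Finset.mem_filter, Finset.mem_range]
    constructor
    · omega
    · rw [Int.toNat_of_nonneg hr0]; exact hw2
  rw [ha, Finset.mem_singleton] at h0mem hrmem
  have : r = 0 := by omega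
  have : (d:ℤ) ∣ j₂ - j₁ := Int.dvd_of_emod_eq_zero this
  exact (dvd_sub_comm).mp this

end Aux

/-- STATEMENT 4. -/
theorem statement4 (d : ℕ) (hd : 1 ≤ d)
    (x x' : ℤ → (Fin d → ℤ))
    (hx : IsSmallChain d x) (hx' : IsSmallChain d x')
    -- `x` and `x'` are small lifts of the same `(d−1)`-simplex `σ ∈ A_{d−1}`
    (himg : Set.range (fun j : ℤ => qA0 d (x j)) =
      Set.range (fun j : ℤ => qA0 d (x' j)))
    (w w' : ℤ → Fin d)
    (hw : ∀ j : ℤ, x (j + 1) = x j + Pi.single (w j) 1)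
    (hw' : ∀ j : ℤ, x' (j + 1) = x' j + Pi.single (w' j) 1) :
    -- each difference is a standard basis vector for a unique index (so `w` exists
    -- and is uniquely determined) …
    (∀ j : ℤ, ∃! k : Fin d, x (j + 1) = x j + Pi.single k 1) ∧
    -- … `w` is injective (on a period, i.e. modulo `d`) …
    (∀ j₁ j₂ : ℤ, w j₁ = w j₂ → (d : ℤ) ∣ j₁ - j₂) ∧
    -- … and surjective, hence a permutation of `{1,…,d}` …
    (∀ k : Fin d, ∃ j : ℤ, w j = k) ∧
    -- … and the map `i ↦ class of x_{w⁻¹(i)}` is independent of the small lift: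
    (∀ j j' : ℤ, w j = w' j' → qA0 d (x j) = qA0 d (x' j')) := by
  -- point ranges coincide
  have key : ∀ (y y' : ℤ → Fin d → ℤ), IsSmallChain d y' →
      Set.range (fun j : ℤ => qA0 d (y j)) ⊆ Set.range (fun j : ℤ => qA0 d (y' j)) →
      ∀ j : ℤ, ∃ m : ℤ, y' m = y j := by
    intro y y' hy' hsub j
    obtain ⟨j', hj'⟩ := hsub ⟨j, rfl⟩
    obtain ⟨m, hm⟩ := qA0_eq.mp hj'
    refine ⟨j' + m * d, ?_⟩
    rw [chain_period_int hy', ← hm]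
  refine ⟨?_, ?_, ?_, ?_⟩
  · intro j
    refine ⟨w j, hw j, fun k hk => single_inj (add_left_cancel (hk.symm.trans (hw j)))⟩
  · exact w_inj hd hx hw
  · intro k
    have hc := chain_count hx hw 0 k
    have : ((Finset.range d).filter (fun t : ℕ => w (0 + (t:ℤ)) = k)).Nonempty := by
      rw [← Finset.card_pos, hc]; norm_num
    obtain ⟨t, ht⟩ := this
    rw [Finset.mem_filter] at ht
    exact ⟨(t:ℤ), by simpa using ht.2⟩
  · intro j j' hjj
    obtain ⟨j'', hj''⟩ := key x x' hx' (le_of_eq himg) j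
    obtain ⟨m, hm⟩ := key x x' hx' (le_of_eq himg) (j + 1)
    obtain ⟨n, hn⟩ := key x' x hx (le_of_eq himg.symm) (j'' + 1)
    have h1 : x' (j'' + 1) ≤ x (j + 1) := by
      have hlt : x' j'' < x' m := by rw [hj'', hm]; exact hx.1 j
      have hm' : j'' < m := (chain_mono hx').lt_iff_lt.mp hlt
      calc x' (j'' + 1) ≤ x' m := (chain_mono hx').monotone (by omega)
        _ = x (j + 1) := hm
    have h2 : x (j + 1) ≤ x' (j'' + 1) := by
      have hlt : x j < x n := by rw [hn, ← hj'']; exact hx'.1 j''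
      have hn' : j < n := (chain_mono hx).lt_iff_lt.mp hlt
      calc x (j + 1) ≤ x n := (chain_mono hx).monotone (by omega)
        _ = x' (j'' + 1) := hn
    have hsucc : x (j + 1) = x' (j'' + 1) := le_antisymm h2 h1
    have hwj : w' j'' = w j := by
      apply single_inj
      have e1 := hw' j''
      rw [← hsucc, hj'', hw j] at e1
      exact (add_left_cancel e1).symm
    have hdvd : (d : ℤ) ∣ j'' - j' := w_inj hd hx' hw' j'' j' (hwj.trans hjj)
    obtain ⟨c, hc⟩ := hdvd
    have hx'eq : x' j'' = x' j' + c • (1 : Fin d → ℤ) := by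
      have := chain_period_int hx' j' c
      rw [show j' + c * (d:ℤ) = j'' by linear_combination -hc] at this
      exact this
    have : qA0 d (x' j') = qA0 d (x j) := by
      rw [← hj'']
      exact qA0_eq.mpr ⟨c, hx'eq⟩
    exact this.symm
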